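/- arXiv:2303.09793 — 3 statements merged into one kernel-verified Lean document; each statement's English description precedes it below -/
import Mathlib

section
/- If X ~ N(0_n, I_n) is an n-dimensional standard Gaussian random vector, then for every p > 2, E[‖X‖₂^p] ≤ (p + n)^{p/2}. -/
open MeasureTheory ProbabilityTheory Real Filter
open scoped ENNReal NNReal

/-- The standard Gaussian measure `N(0ₙ, Iₙ)` on `ℝⁿ` (as `EuclideanSpace ℝ (Fin n)`). -/
noncomputable def stdGaussian (n : ℕ) : Measure (EuclideanSpace ℝ (Fin n)) :=
  (Measure.pi fun _ : Fin n => gaussianReal 0 1).map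
    (MeasurableEquiv.toLp 2 (Fin n → ℝ))

lemma aux_rpow_le_exp {q s t : ℝ} (hq : 0 < q) (hs : 0 < s) (ht : 0 ≤ t) :
    t ^ q ≤ (q / s) ^ q * rexp (-q) * rexp (s * t) := by
  rcases ht.eq_or_lt with h0 | ht
  · rw [← h0, Real.zero_rpow hq.ne']
    positivity
  · have h1 : Real.log (s * t / q) ≤ s * t / q - 1 :=
      Real.log_le_sub_one_of_pos (by positivity)
    rw [Real.log_div (by positivity) hq.ne', Real.log_mul hs.ne' ht.ne'] at h1
    have hst : s * t / q * q = s * t := div_mul_cancel₀ _ hq.ne'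
    have h2 : Real.log t * q ≤ Real.log (q / s) * q + (-q) + s * t := by
      rw [Real.log_div hq.ne' hs.ne']
      nlinarith [mul_le_mul_of_nonneg_right h1 hq.le]
    calc t ^ q = rexp (Real.log t * q) := by rw [Real.rpow_def_of_pos ht]
    _ ≤ rexp (Real.log (q / s) * q + (-q) + s * t) := Real.exp_le_exp.2 h2
    _ = (q / s) ^ q * rexp (-q) * rexp (s * t) := by
        rw [Real.exp_add, Real.exp_add, ← Real.rpow_def_of_pos (by positivity)]

lemma aux_pdf_mul_exp {s : ℝ} (x : ℝ) :
    gaussianPDFReal 0 1 x * rexp (s * x ^ 2)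
      = (Real.sqrt (2 * π))⁻¹ * rexp (-(1 / 2 - s) * x ^ 2) := by
  simp only [gaussianPDFReal, NNReal.coe_one, mul_one, sub_zero]
  rw [mul_assoc, ← Real.exp_add]
  congr 2
  ring_nf

lemma aux_gaussian_exp_integrable {s : ℝ} (hs : s < 1 / 2) :
    Integrable (fun x : ℝ => rexp (s * x ^ 2)) (gaussianReal 0 1) := by
  have hb : 0 < 1 / 2 - s := by linarith
  rw [gaussianReal_of_var_ne_zero 0 one_ne_zero, gaussianPDF_def,
    integrable_withDensity_iff ((measurable_gaussianPDFReal 0 1).ennreal_ofReal)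
      (ae_of_all _ fun x => ENNReal.ofReal_lt_top)]
  have : (fun x : ℝ => rexp (s * x ^ 2) * (ENNReal.ofReal (gaussianPDFReal 0 1 x)).toReal)
      = fun x => (Real.sqrt (2 * π))⁻¹ * rexp (-(1 / 2 - s) * x ^ 2) := by
    funext x
    rw [ENNReal.toReal_ofReal (gaussianPDFReal_nonneg 0 1 x), mul_comm]
    exact aux_pdf_mul_exp x
  rw [this]
  exact (integrable_exp_neg_mul_sq hb).const_mul _

lemma aux_gaussian_exp_integral {s : ℝ} (hs : s < 1 / 2) :
    ∫ x, rexp (s * x ^ 2) ∂(gaussianReal 0 1) = Real.sqrt (1 - 2 * s)⁻¹ := by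
  have hb : 0 < 1 / 2 - s := by linarith
  rw [gaussianReal_of_var_ne_zero 0 one_ne_zero, gaussianPDF_def]
  have hrw : (fun x : ℝ => ENNReal.ofReal (gaussianPDFReal 0 1 x))
      = fun x => ((gaussianPDFReal 0 1 x).toNNReal : ℝ≥0∞) := rfl
  rw [hrw, integral_withDensity_eq_integral_smul
    ((measurable_gaussianPDFReal 0 1).real_toNNReal)]
  have : (fun x : ℝ => (gaussianPDFReal 0 1 x).toNNReal • rexp (s * x ^ 2))
      = fun x => (Real.sqrt (2 * π))⁻¹ * rexp (-(1 / 2 - s) * x ^ 2) := by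
    funext x
    rw [NNReal.smul_def, smul_eq_mul, Real.coe_toNNReal _ (gaussianPDFReal_nonneg 0 1 x)]
    exact aux_pdf_mul_exp x
  rw [this, integral_const_mul, integral_gaussian]
  rw [← Real.sqrt_inv, ← Real.sqrt_mul (by positivity)]
  congr 1
  have hπ : (0:ℝ) < π := Real.pi_pos
  field_simp

lemma aux_pi_integrable {n : ℕ} (μ : Measure ℝ) [SigmaFinite μ] (f : ℝ → ℝ)
    (hf : Integrable f μ) :
    Integrable (fun y : Fin n → ℝ => ∏ i, f (y i)) (Measure.pi fun _ => μ) := by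
  letI : MeasureSpace ℝ := ⟨μ⟩
  exact Integrable.fintype_prod (f := fun _ : Fin n => f) fun i => hf

lemma aux_pi_integral {n : ℕ} (μ : Measure ℝ) [SigmaFinite μ] (f : ℝ → ℝ) :
    ∫ y : Fin n → ℝ, ∏ i, f (y i) ∂(Measure.pi fun _ => μ) = (∫ x, f x ∂μ) ^ n := by
  letI : MeasureSpace ℝ := ⟨μ⟩
  simpa using MeasureTheory.integral_fintype_prod_eq_pow (ι := Fin n) f

/-- If `X ~ N(0ₙ, Iₙ)`, then `E[‖X‖₂ ^ p] ≤ (p + n) ^ (p/2)` for all `p > 2`. -/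
theorem gaussian_norm_moment_le_of_two_lt (n : ℕ) (p : ℝ) (hp : 2 < p) :
    ∫ x, ‖x‖ ^ p ∂(stdGaussian n) ≤ (p + n) ^ (p / 2) := by
  have hp0 : 0 < p := by linarith
  rcases Nat.eq_zero_or_pos n with rfl | hn
  · have h0 : ∀ x : EuclideanSpace ℝ (Fin 0), ‖x‖ ^ p = 0 := fun x => by
      rw [Subsingleton.elim x 0, norm_zero, Real.zero_rpow hp0.ne']
    simp only [h0, integral_zero]
    exact Real.rpow_nonneg (by push_cast; linarith) _
  · have hnR : (0:ℝ) < n := by exact_mod_cast hn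
    have hpn : 0 < p + n := by linarith
    set q : ℝ := p / 2 with hqdef
    set s : ℝ := p / (2 * (p + n)) with hsdef
    have hq0 : 0 < q := by positivity
    have hs0 : 0 < s := by positivity
    have hs12 : s < 1 / 2 := by
      rw [hsdef, div_lt_div_iff₀ (by linarith) two_pos]
      nlinarith
    have hqs : q / s = p + n := by
      rw [hqdef, hsdef]
      field_simp
    have h2s : (1 - 2 * s)⁻¹ = (p + n) / n := by
      rw [hsdef]
      rw [show 1 - 2 * (p / (2 * (p + n))) = n / (p + n) by field_simp; ring]
      rw [inv_div]
    -- norm identity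
    have hnorm : ∀ y : Fin n → ℝ,
        ‖(MeasurableEquiv.toLp 2 (Fin n → ℝ)) y‖ ^ 2 = ∑ i, (y i) ^ 2 := by
      intro y
      rw [EuclideanSpace.norm_eq, Real.sq_sqrt (Finset.sum_nonneg fun i _ => sq_nonneg _)]
      simp [MeasurableEquiv.coe_toLp, Real.norm_eq_abs, sq_abs]
    have hprod : ∀ y : Fin n → ℝ,
        rexp (s * ∑ i, (y i) ^ 2) = ∏ i : Fin n, rexp (s * (y i) ^ 2) := fun y => by
      rw [Finset.mul_sum, Real.exp_sum]
    -- integrability of the dominating function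
    have hIntStd : Integrable
        (fun x : EuclideanSpace ℝ (Fin n) => rexp (s * ‖x‖ ^ 2)) (stdGaussian n) := by
      rw [_root_.stdGaussian, integrable_map_equiv]
      have : ((fun x : EuclideanSpace ℝ (Fin n) => rexp (s * ‖x‖ ^ 2)) ∘
          (MeasurableEquiv.toLp 2 (Fin n → ℝ)))
          = fun y : Fin n → ℝ => ∏ i, rexp (s * (y i) ^ 2) := by
        funext y
        simp only [Function.comp_apply, hnorm y, hprod y]
      rw [this]
      exact aux_pi_integrable _ _ (aux_gaussian_exp_integrable hs12)
    -- value of the dominating integral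
    have hval : ∫ x, rexp (s * ‖x‖ ^ 2) ∂(stdGaussian n)
        = (Real.sqrt (1 - 2 * s)⁻¹) ^ n := by
      rw [_root_.stdGaussian, integral_map_equiv]
      have : (fun y : Fin n → ℝ =>
          rexp (s * ‖(MeasurableEquiv.toLp 2 (Fin n → ℝ)) y‖ ^ 2))
          = fun y : Fin n → ℝ => ∏ i, rexp (s * (y i) ^ 2) := by
        funext y
        rw [hnorm y, hprod y]
      rw [this]
      have h := aux_pi_integral (n := n) (gaussianReal 0 1) (fun t => rexp (s * t ^ 2))
      rw [aux_gaussian_exp_integral hs12] at h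
      exact h
    -- pointwise bound
    have hpt : ∀ x : EuclideanSpace ℝ (Fin n),
        ‖x‖ ^ p ≤ (q / s) ^ q * rexp (-q) * rexp (s * ‖x‖ ^ 2) := by
      intro x
      have h2q : ‖x‖ ^ p = (‖x‖ ^ 2) ^ q := by
        rw [show p = 2 * q by rw [hqdef]; ring, Real.rpow_mul (norm_nonneg x),
          show ((2:ℝ)) = ((2:ℕ):ℝ) by norm_num, Real.rpow_natCast]
      rw [h2q]
      exact aux_rpow_le_exp hq0 hs0 (sq_nonneg _)
    -- monotonicity
    have hmono : ∫ x, ‖x‖ ^ p ∂(stdGaussian n)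
        ≤ ∫ x, (q / s) ^ q * rexp (-q) * rexp (s * ‖x‖ ^ 2) ∂(stdGaussian n) :=
      integral_mono_of_nonneg (ae_of_all _ fun x => Real.rpow_nonneg (norm_nonneg x) p)
        ((hIntStd.const_mul _)) (ae_of_all _ hpt)
    rw [integral_const_mul, hval, hqs, h2s] at hmono
    refine hmono.trans ?_
    -- final numeric inequality
    have ha : (0:ℝ) < (p + n) / n := by positivity
    have hsqrt : Real.sqrt ((p + n) / n) = rexp (Real.log ((p + n) / n) / 2) := by
      rw [← Real.log_sqrt ha.le, Real.exp_log (Real.sqrt_pos.2 ha)]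
    have hpow : (Real.sqrt ((p + n) / n)) ^ n = rexp ((n : ℝ) * (Real.log ((p + n) / n) / 2)) := by
      rw [hsqrt, ← Real.exp_nat_mul]
    have hlog : Real.log ((p + n) / n) ≤ p / n := by
      have := Real.log_le_sub_one_of_pos ha
      have : (p + n) / n - 1 = p / n := by field_simp; ring
      linarith [Real.log_le_sub_one_of_pos ha, this]
    have hfin : rexp (-q) * (Real.sqrt ((p + n) / n)) ^ n ≤ 1 := by
      rw [hpow, ← Real.exp_add, Real.exp_le_one_iff]
      have hnn : (0:ℝ) ≤ (n:ℝ) := hnR.le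
      have : (n : ℝ) * (Real.log ((p + n) / n) / 2) ≤ (n : ℝ) * (p / n / 2) := by
        apply mul_le_mul_of_nonneg_left _ hnn
        linarith
      have hcalc : (n : ℝ) * (p / n / 2) = p / 2 := by
        field_simp
      linarith [hqdef.le, hqdef.ge]
    calc (p + n) ^ q * rexp (-q) * Real.sqrt ((p + n) / n) ^ n
        = (p + n) ^ q * (rexp (-q) * Real.sqrt ((p + n) / n) ^ n) := by ring
      _ ≤ (p + n) ^ q * 1 :=
          mul_le_mul_of_nonneg_left hfin (Real.rpow_nonneg hpn.le _)
      _ = (p + n) ^ (p / 2) := by rw [mul_one, hqdef]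
end

section
/- Let f: ℝⁿ → ℝ be convex and continuously differentiable with L₁-Lipschitz gradient with respect to ‖·‖₂, and let μ > 0. Then for every x ∈ ℝⁿ, the gradient ∇f_μ(x) of the Gaussian approximation f_μ is a δ-subgradient of f at x with δ = (μ²/2) L₁ n; that is, f(y) ≥ f(x) + ⟨∇f_μ(x), y − x⟩ − (μ²/2) L₁ n for all y ∈ ℝⁿ. -/
open MeasureTheory ProbabilityTheory Real Filter
open scoped RealInnerProductSpace

/-- Nesterov's Gaussian approximation `f_μ(x) = E[f(x + μ U)]`, `U ~ N(0ₙ, Iₙ)`. -/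
noncomputable def gaussApprox {n : ℕ} (f : EuclideanSpace ℝ (Fin n) → ℝ) (μ : ℝ)
    (x : EuclideanSpace ℝ (Fin n)) : ℝ :=
  ∫ u, f (x + μ • u) ∂(stdGaussian n)

lemma integrable_sq_mul_gaussPDF :
    Integrable (fun x : ℝ => x ^ 2 * Real.exp (-(1/2) * x ^ 2)) := by
  have := integrable_rpow_mul_exp_neg_mul_sq (b := 1/2) (by norm_num) (s := 2) (by norm_num)
  simpa [Real.rpow_natCast] using this

lemma hasDerivAt_aux (x : ℝ) : HasDerivAt (fun x : ℝ => -x * Real.exp (-(1/2) * x ^ 2))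
    (x ^ 2 * Real.exp (-(1/2) * x ^ 2) - Real.exp (-(1/2) * x ^ 2)) x := by
  have he : HasDerivAt (fun x : ℝ => Real.exp (-(1/2) * x ^ 2))
      (Real.exp (-(1/2) * x ^ 2) * (-(1/2) * (2 * x))) x := by
    have := ((hasDerivAt_pow 2 x).const_mul (-(1/2) : ℝ)).exp
    simpa using this
  have := ((hasDerivAt_id x).neg.mul he)
  refine this.congr_deriv ?_
  simp
  ring

lemma integral_sq_mul_gaussPDF :
    ∫ x : ℝ, x ^ 2 * Real.exp (-(1/2) * x ^ 2) = Real.sqrt (2 * π) := by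
  have hint : Integrable (fun x : ℝ =>
      x ^ 2 * Real.exp (-(1/2) * x ^ 2) - Real.exp (-(1/2) * x ^ 2)) :=
    integrable_sq_mul_gaussPDF.sub (integrable_exp_neg_mul_sq (by norm_num))
  have hf : Integrable (fun x : ℝ => -x * Real.exp (-(1/2) * x ^ 2)) := by
    have h := (integrable_mul_exp_neg_mul_sq (b := 1/2) (by norm_num)).neg
    refine h.congr (Filter.Eventually.of_forall fun x => ?_)
    simp
  have h0 := integral_eq_zero_of_hasDerivAt_of_integrable hasDerivAt_aux hint hf
  rw [integral_sub integrable_sq_mul_gaussPDF (integrable_exp_neg_mul_sq (by norm_num)),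
    sub_eq_zero] at h0
  rw [h0, integral_gaussian]
  norm_num
  ring

lemma gaussianPDFReal_zero_one (x : ℝ) :
    gaussianPDFReal 0 1 x = (Real.sqrt (2 * π))⁻¹ * Real.exp (-(1/2) * x ^ 2) := by
  simp only [gaussianPDFReal, NNReal.coe_one, mul_one, sub_zero]
  congr 1
  ring

lemma integrable_gaussianReal_iff {g : ℝ → ℝ} :
    Integrable g (gaussianReal 0 1) ↔
      Integrable (fun x => g x * gaussianPDFReal 0 1 x) volume := by
  rw [gaussianReal_of_var_ne_zero 0 one_ne_zero,
    integrable_withDensity_iff (measurable_gaussianPDF 0 1)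
      (Filter.Eventually.of_forall fun x => ENNReal.ofReal_lt_top)]
  refine integrable_congr (Filter.Eventually.of_forall fun x => ?_)
  simp only [gaussianPDF, ENNReal.toReal_ofReal (gaussianPDFReal_nonneg 0 1 x)]

lemma integral_gaussianReal_eq (g : ℝ → ℝ) :
    ∫ x, g x ∂(gaussianReal 0 1) = ∫ x, gaussianPDFReal 0 1 x * g x := by
  rw [gaussianReal_of_var_ne_zero 0 one_ne_zero]
  have : (Measure.withDensity volume (gaussianPDF 0 1))
      = Measure.withDensity volume (fun x => ((gaussianPDFReal 0 1 x).toNNReal : ENNReal)) := by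
    rfl
  rw [this, integral_withDensity_eq_integral_smul
    (by exact (measurable_gaussianPDFReal 0 1).real_toNNReal) g]
  refine integral_congr_ae (Filter.Eventually.of_forall fun x => ?_)
  simp [NNReal.smul_def, Real.coe_toNNReal _ (gaussianPDFReal_nonneg 0 1 x)]

lemma integrable_sq_gaussianReal : Integrable (fun x : ℝ => x ^ 2) (gaussianReal 0 1) := by
  rw [integrable_gaussianReal_iff]
  have : Integrable (fun x : ℝ =>
      (Real.sqrt (2 * π))⁻¹ * (x ^ 2 * Real.exp (-(1/2) * x ^ 2))) :=
    integrable_sq_mul_gaussPDF.const_mul _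
  refine this.congr (Filter.Eventually.of_forall fun x => ?_)
  simp only [gaussianPDFReal_zero_one]
  ring

lemma integral_sq_gaussianReal : ∫ x : ℝ, x ^ 2 ∂(gaussianReal 0 1) = 1 := by
  rw [integral_gaussianReal_eq]
  have : ∀ x : ℝ, gaussianPDFReal 0 1 x * x ^ 2
      = (Real.sqrt (2 * π))⁻¹ * (x ^ 2 * Real.exp (-(1/2) * x ^ 2)) := by
    intro x; rw [gaussianPDFReal_zero_one]; ring
  rw [integral_congr_ae (Filter.Eventually.of_forall this), integral_const_mul,
    integral_sq_mul_gaussPDF]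
  rw [inv_mul_cancel₀]
  positivity

lemma integrable_id_gaussianReal : Integrable (fun x : ℝ => x) (gaussianReal 0 1) := by
  rw [integrable_gaussianReal_iff]
  have : Integrable (fun x : ℝ =>
      (Real.sqrt (2 * π))⁻¹ * (x * Real.exp (-(1/2) * x ^ 2))) :=
    (integrable_mul_exp_neg_mul_sq (by norm_num)).const_mul _
  refine this.congr (Filter.Eventually.of_forall fun x => ?_)
  simp only [gaussianPDFReal_zero_one]
  ring

lemma integral_id_gaussianReal : ∫ x : ℝ, x ∂(gaussianReal 0 1) = 0 := by
  rw [integral_gaussianReal_eq]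
  have hd : ∀ x : ℝ, HasDerivAt (fun x : ℝ => -((Real.sqrt (2 * π))⁻¹ * Real.exp (-(1/2) * x ^ 2)))
      (gaussianPDFReal 0 1 x * x) x := by
    intro x
    have := ((((hasDerivAt_pow 2 x).const_mul (-(1/2) : ℝ)).exp).const_mul
      ((Real.sqrt (2 * π))⁻¹)).neg
    refine this.congr_deriv ?_
    simp only [gaussianPDFReal_zero_one]
    ring_nf
  have hint : Integrable (fun x : ℝ => gaussianPDFReal 0 1 x * x) := by
    have h := (integrable_gaussianReal_iff (g := fun x : ℝ => x)).mp integrable_id_gaussianReal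
    refine h.congr (Filter.Eventually.of_forall fun x => ?_)
    ring
  have hf : Integrable (fun x : ℝ =>
      -((Real.sqrt (2 * π))⁻¹ * Real.exp (-(1/2) * x ^ 2))) :=
    (((integrable_exp_neg_mul_sq (b := 1/2) (by norm_num)).const_mul _).neg)
  exact integral_eq_zero_of_hasDerivAt_of_integrable hd hint hf

section GaussN

variable {n : ℕ}

instance : IsProbabilityMeasure (stdGaussian n) := by
  unfold _root_.stdGaussian
  exact Measure.isProbabilityMeasure_map (MeasurableEquiv.measurable _).aemeasurable

lemma pi_map_eval_gauss (i : Fin n) :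
    Measure.map (fun v : Fin n → ℝ => v i) (Measure.pi fun _ : Fin n => gaussianReal 0 1)
      = gaussianReal 0 1 := by
  refine Measure.ext fun s hs => ?_
  rw [Measure.map_apply (measurable_pi_apply i) hs]
  have h : (fun v : Fin n → ℝ => v i) ⁻¹' s
      = Set.pi Set.univ (Function.update (fun _ : Fin n => (Set.univ : Set ℝ)) i s) := by
    ext v
    simp only [Set.mem_preimage, Set.mem_pi, Set.mem_univ, forall_true_left, Function.eval]
    constructor
    · intro hv j
      rcases eq_or_ne j i with rfl | hj
      · simpa using hv
      · simp [Function.update_of_ne hj]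
    · intro hv
      have := hv i
      simpa using this
  rw [h, Measure.pi_pi]
  rw [Finset.prod_eq_single i (fun j _ hj => by simp [Function.update_of_ne hj])
    (fun h => absurd (Finset.mem_univ i) h)]
  simp

lemma integrable_eval_pi {i : Fin n} {g : ℝ → ℝ} (hg : Integrable g (gaussianReal 0 1)) :
    Integrable (fun v : Fin n → ℝ => g (v i)) (Measure.pi fun _ => gaussianReal 0 1) := by
  have := (integrable_map_measure (f := fun v : Fin n → ℝ => v i) (g := g)
    (by rw [pi_map_eval_gauss]; exact hg.aestronglyMeasurable)
    (measurable_pi_apply i).aemeasurable).mp (by rwa [pi_map_eval_gauss])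
  exact this

lemma integral_eval_pi {i : Fin n} {g : ℝ → ℝ} (hg : AEStronglyMeasurable g (gaussianReal 0 1)) :
    ∫ v : Fin n → ℝ, g (v i) ∂(Measure.pi fun _ => gaussianReal 0 1)
      = ∫ x : ℝ, g x ∂(gaussianReal 0 1) := by
  conv_rhs => rw [← pi_map_eval_gauss (n := n) i]
  rw [integral_map (measurable_pi_apply i).aemeasurable (by rwa [pi_map_eval_gauss])]

lemma stdGaussian_integral_eq (g : EuclideanSpace ℝ (Fin n) → ℝ) :
    ∫ u, g u ∂(stdGaussian n)
      = ∫ v : Fin n → ℝ, g ((MeasurableEquiv.toLp 2 (Fin n → ℝ)) v)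
          ∂(Measure.pi fun _ => gaussianReal 0 1) := by
  rw [_root_.stdGaussian, integral_map_equiv]

lemma stdGaussian_integrable_iff (g : EuclideanSpace ℝ (Fin n) → ℝ) :
    Integrable g (stdGaussian n)
      ↔ Integrable (fun v : Fin n → ℝ => g ((MeasurableEquiv.toLp 2 (Fin n → ℝ)) v))
          (Measure.pi fun _ => gaussianReal 0 1) := by
  rw [_root_.stdGaussian, integrable_map_equiv]
  rfl

lemma euclid_symm_apply (v : Fin n → ℝ) (i : Fin n) :
    (MeasurableEquiv.toLp 2 (Fin n → ℝ)) v i = v i := rfl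

lemma inner_symm_eq (c : EuclideanSpace ℝ (Fin n)) (v : Fin n → ℝ) :
    ⟪c, (MeasurableEquiv.toLp 2 (Fin n → ℝ)) v⟫ = ∑ i, c i * v i := by
  rw [PiLp.inner_apply]
  refine Finset.sum_congr rfl fun i _ => ?_
  rw [euclid_symm_apply]
  simp [RCLike.inner_apply, mul_comm]

lemma normSq_symm_eq (v : Fin n → ℝ) :
    ‖(MeasurableEquiv.toLp 2 (Fin n → ℝ)) v‖ ^ 2 = ∑ i, v i ^ 2 := by
  rw [EuclideanSpace.norm_eq, Real.sq_sqrt (Finset.sum_nonneg fun i _ => sq_nonneg _)]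
  refine Finset.sum_congr rfl fun i _ => ?_
  rw [euclid_symm_apply]
  simp [Real.norm_eq_abs, sq_abs]

lemma integrable_inner_stdGaussian (c : EuclideanSpace ℝ (Fin n)) :
    Integrable (fun u => ⟪c, u⟫) (stdGaussian n) := by
  rw [stdGaussian_integrable_iff]
  refine (integrable_finset_sum Finset.univ fun i _ =>
    ((integrable_eval_pi (i := i) integrable_id_gaussianReal).const_mul (c i))).congr
    (Filter.Eventually.of_forall fun v => (inner_symm_eq c v).symm)

lemma integral_inner_stdGaussian (c : EuclideanSpace ℝ (Fin n)) :
    ∫ u, ⟪c, u⟫ ∂(stdGaussian n) = 0 := by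
  rw [stdGaussian_integral_eq]
  rw [integral_congr_ae (Filter.Eventually.of_forall fun v => inner_symm_eq c v)]
  rw [integral_finset_sum Finset.univ fun i _ =>
    ((integrable_eval_pi (i := i) integrable_id_gaussianReal).const_mul (c i))]
  refine Finset.sum_eq_zero fun i _ => ?_
  rw [integral_const_mul, integral_eval_pi integrable_id_gaussianReal.aestronglyMeasurable,
    _root_.integral_id_gaussianReal, mul_zero]

lemma integrable_normSq_stdGaussian :
    Integrable (fun u : EuclideanSpace ℝ (Fin n) => ‖u‖ ^ 2) (stdGaussian n) := by
  rw [stdGaussian_integrable_iff]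
  refine (integrable_finset_sum Finset.univ fun i _ =>
    (integrable_eval_pi (i := i) integrable_sq_gaussianReal)).congr
    (Filter.Eventually.of_forall fun v => (normSq_symm_eq v).symm)

lemma integral_normSq_stdGaussian :
    ∫ u : EuclideanSpace ℝ (Fin n), ‖u‖ ^ 2 ∂(stdGaussian n) = n := by
  rw [stdGaussian_integral_eq]
  rw [integral_congr_ae (Filter.Eventually.of_forall fun v => normSq_symm_eq v)]
  rw [integral_finset_sum Finset.univ fun i _ =>
    (integrable_eval_pi (i := i) integrable_sq_gaussianReal)]
  simp [integral_eval_pi integrable_sq_gaussianReal.aestronglyMeasurable,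
    integral_sq_gaussianReal]

lemma integrable_norm_stdGaussian :
    Integrable (fun u : EuclideanSpace ℝ (Fin n) => ‖u‖) (stdGaussian n) := by
  refine Integrable.mono' ((integrable_const (1 : ℝ)).add integrable_normSq_stdGaussian)
    (by fun_prop) (Filter.Eventually.of_forall fun u => ?_)
  rw [Real.norm_of_nonneg (norm_nonneg u)]
  simp only [Pi.add_apply]
  nlinarith [norm_nonneg u, sq_nonneg (‖u‖ - 1)]

end GaussN

section Analysis

variable {n : ℕ} {f : EuclideanSpace ℝ (Fin n) → ℝ}

lemma fderiv_eq_inner_gradient (hf : DifferentiableAt ℝ f w) (v : EuclideanSpace ℝ (Fin n)) :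
    fderiv ℝ f w v = ⟪gradient f w, v⟫ := by
  have h := hf.hasGradientAt
  rw [hasGradientAt_iff_hasFDerivAt] at h
  rw [h.fderiv]
  simp [InnerProductSpace.toDual_apply_apply]

lemma line_hasDerivAt (z v : EuclideanSpace ℝ (Fin n)) (t : ℝ) :
    HasDerivAt (fun t : ℝ => z + t • v) v t := by
  simpa using ((hasDerivAt_id t).smul_const v).const_add z

lemma comp_line_hasDerivAt (hf : DifferentiableAt ℝ f (z + t • v)) :
    HasDerivAt (fun t : ℝ => f (z + t • v)) ⟪gradient f (z + t • v), v⟫ t := by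
  have h := hf.hasFDerivAt.comp_hasDerivAt t (line_hasDerivAt z v t)
  rwa [fderiv_eq_inner_gradient hf] at h

/-- descent lemma -/
lemma descent_lemma (hsmooth : ContDiff ℝ 1 f) {L₁ : NNReal}
    (hgrad : LipschitzWith L₁ (gradient f)) (z v : EuclideanSpace ℝ (Fin n)) :
    f (z + v) ≤ f z + ⟪gradient f z, v⟫ + L₁ / 2 * ‖v‖ ^ 2 := by
  have hdiff : Differentiable ℝ f := hsmooth.differentiable one_ne_zero
  set φ' : ℝ → ℝ := fun t => ⟪gradient f (z + t • v), v⟫ with hφ'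
  have hφ : ∀ t : ℝ, HasDerivAt (fun t : ℝ => f (z + t • v)) (φ' t) t :=
    fun t => comp_line_hasDerivAt (hdiff _)
  have hcont : Continuous φ' :=
    (hgrad.continuous.comp (continuous_const.add (continuous_id.smul continuous_const))).inner
      continuous_const
  have key : f (z + v) - f z = ∫ t in (0:ℝ)..1, φ' t := by
    rw [intervalIntegral.integral_eq_sub_of_hasDerivAt (fun t _ => hφ t)
      (hcont.intervalIntegrable 0 1)]
    simp
  have hb : ∀ t ∈ Set.Icc (0:ℝ) 1, φ' t ≤ ⟪gradient f z, v⟫ + L₁ * ‖v‖ ^ 2 * t := by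
    intro t ht
    have h1 : φ' t - ⟪gradient f z, v⟫ = ⟪gradient f (z + t • v) - gradient f z, v⟫ := by
      rw [inner_sub_left]
    have h2 : ⟪gradient f (z + t • v) - gradient f z, v⟫ ≤ L₁ * t * ‖v‖ * ‖v‖ := by
      refine (real_inner_le_norm _ _).trans ?_
      have h3 : ‖gradient f (z + t • v) - gradient f z‖ ≤ L₁ * (t * ‖v‖) := by
        have := hgrad.dist_le_mul (z + t • v) z
        rwa [dist_eq_norm, dist_eq_norm, add_sub_cancel_left, norm_smul,
          Real.norm_of_nonneg ht.1] at this
      calc ‖gradient f (z + t • v) - gradient f z‖ * ‖v‖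
          ≤ (L₁ * (t * ‖v‖)) * ‖v‖ := by gcongr
        _ = L₁ * t * ‖v‖ * ‖v‖ := by ring
    nlinarith [h1, h2]
  have hInt2 : IntervalIntegrable
      (fun t : ℝ => ⟪gradient f z, v⟫ + (L₁ : ℝ) * ‖v‖ ^ 2 * t) MeasureTheory.volume 0 1 :=
    (by continuity : Continuous
      (fun t : ℝ => ⟪gradient f z, v⟫ + (L₁ : ℝ) * ‖v‖ ^ 2 * t)).intervalIntegrable 0 1
  have hmono := intervalIntegral.integral_mono_on (by norm_num : (0:ℝ) ≤ 1)
    (hcont.intervalIntegrable 0 1) hInt2 hb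
  have hval : (∫ t in (0:ℝ)..1, (⟪gradient f z, v⟫ + (L₁ : ℝ) * ‖v‖ ^ 2 * t))
      = ⟪gradient f z, v⟫ + (L₁ : ℝ) / 2 * ‖v‖ ^ 2 := by
    rw [intervalIntegral.integral_add intervalIntegrable_const
      ((intervalIntegral.intervalIntegrable_id).const_mul _)]
    rw [intervalIntegral.integral_const, intervalIntegral.integral_const_mul,
      integral_id]
    norm_num
    ring
  rw [hval] at hmono
  linarith [key, hmono]

/-- gradient inequality for convex functions -/
lemma convex_grad_ineq {φ : EuclideanSpace ℝ (Fin n) → ℝ} (hconv : ConvexOn ℝ Set.univ φ)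
    {G x : EuclideanSpace ℝ (Fin n)} (hd : HasGradientAt φ G x)
    (y : EuclideanSpace ℝ (Fin n)) :
    φ x + ⟪G, y - x⟫ ≤ φ y := by
  set ψ : ℝ → ℝ := fun t => φ (x + t • (y - x)) with hψ
  have hψconv : ConvexOn ℝ Set.univ ψ := by
    have h := hconv.comp_affineMap (AffineMap.lineMap x y)
    have he : ∀ t : ℝ, (φ ∘ (AffineMap.lineMap x y)) t = ψ t := by
      intro t
      simp [AffineMap.lineMap_apply, hψ, add_comm]
    rw [Set.preimage_univ] at h
    exact funext he ▸ h
  have hψd : HasDerivAt ψ ⟪G, y - x⟫ 0 := by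
    have hf : HasFDerivAt φ (InnerProductSpace.toDual ℝ _ G) x :=
      (hasGradientAt_iff_hasFDerivAt.mp hd)
    have hf' : HasFDerivAt φ (InnerProductSpace.toDual ℝ _ G) (x + (0:ℝ) • (y - x)) := by
      simpa using hf
    have h := hf'.comp_hasDerivAt 0 (line_hasDerivAt x (y - x) 0)
    simp only [InnerProductSpace.toDual_apply_apply] at h
    exact h
  have hs := hψconv.le_slope_of_hasDerivAt (Set.mem_univ 0) (Set.mem_univ 1) zero_lt_one hψd
  rw [slope_def_field] at hs
  simp only [hψ, one_smul, zero_smul, add_zero] at hs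
  have h1 : x + (y - x) = y := by abel
  rw [h1] at hs
  have : ⟪G, y - x⟫ ≤ φ y - φ x := by
    refine hs.trans ?_
    norm_num
  linarith

end Analysis

section Main

variable {n : ℕ} {f : EuclideanSpace ℝ (Fin n) → ℝ}

lemma fderiv_eq_toDual_gradient (f : EuclideanSpace ℝ (Fin n) → ℝ)
    (w : EuclideanSpace ℝ (Fin n)) :
    fderiv ℝ f w = InnerProductSpace.toDual ℝ _ (gradient f w) := by
  unfold gradient
  exact (LinearIsometryEquiv.apply_symm_apply _ _).symm

lemma norm_fderiv_sub_eq (f : EuclideanSpace ℝ (Fin n) → ℝ) (p q : EuclideanSpace ℝ (Fin n)) :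
    ‖fderiv ℝ f p - fderiv ℝ f q‖ = ‖gradient f p - gradient f q‖ := by
  rw [fderiv_eq_toDual_gradient, fderiv_eq_toDual_gradient, ← map_sub,
    LinearIsometryEquiv.norm_map]

lemma norm_fderiv_eq (f : EuclideanSpace ℝ (Fin n) → ℝ) (p : EuclideanSpace ℝ (Fin n)) :
    ‖fderiv ℝ f p‖ = ‖gradient f p‖ := by
  rw [fderiv_eq_toDual_gradient, LinearIsometryEquiv.norm_map]

variable (hconv : ConvexOn ℝ Set.univ f) (hsmooth : ContDiff ℝ 1 f)
  {L₁ : NNReal} (hgrad : LipschitzWith L₁ (gradient f)) {μ : ℝ} (hμ : 0 < μ)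

include hconv hsmooth hgrad in
lemma integrable_shift (z : EuclideanSpace ℝ (Fin n)) :
    Integrable (fun u => f (z + μ • u)) (stdGaussian n) := by
  have hdiff : Differentiable ℝ f := hsmooth.differentiable one_ne_zero
  have hA : Integrable (fun u : EuclideanSpace ℝ (Fin n) =>
      f z + ⟪gradient f z, μ • u⟫) (stdGaussian n) := by
    have : Integrable (fun u : EuclideanSpace ℝ (Fin n) =>
        ⟪gradient f z, u⟫ * μ) (stdGaussian n) :=
      (integrable_inner_stdGaussian (gradient f z)).mul_const μ
    refine ((integrable_const (f z)).add this).congr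
      (Filter.Eventually.of_forall fun u => ?_)
    simp only [Pi.add_apply]
    rw [real_inner_smul_right]
    ring
  have hr : Integrable (fun u : EuclideanSpace ℝ (Fin n) =>
      f (z + μ • u) - (f z + ⟪gradient f z, μ • u⟫)) (stdGaussian n) := by
    refine Integrable.mono' (integrable_normSq_stdGaussian.const_mul ((L₁ : ℝ) / 2 * μ ^ 2))
      ?_ (Filter.Eventually.of_forall fun u => ?_)
    · apply Continuous.aestronglyMeasurable
      have hc1 : Continuous fun u : EuclideanSpace ℝ (Fin n) => z + μ • u :=
        continuous_const.add (continuous_const_smul μ)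
      exact ((hsmooth.continuous.comp hc1).sub
        (continuous_const.add ((continuous_const.inner (continuous_const_smul μ)))))
    · have hlow := convex_grad_ineq hconv (hdiff z).hasGradientAt (z + μ • u)
      rw [add_sub_cancel_left] at hlow
      have hup := descent_lemma hsmooth hgrad z (μ • u)
      rw [Real.norm_of_nonneg (by linarith)]
      have hn : ‖μ • u‖ ^ 2 = μ ^ 2 * ‖u‖ ^ 2 := by
        rw [norm_smul, mul_pow, Real.norm_eq_abs, sq_abs]
      rw [hn] at hup
      have : (L₁ : ℝ) / 2 * (μ ^ 2 * ‖u‖ ^ 2) = (L₁ : ℝ) / 2 * μ ^ 2 * ‖u‖ ^ 2 := by ring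
      linarith
  refine (hA.add hr).congr (Filter.Eventually.of_forall fun u => ?_)
  simp only [Pi.add_apply]
  ring

include hconv hsmooth hgrad in
lemma gaussApprox_sandwich (z : EuclideanSpace ℝ (Fin n)) :
    f z ≤ gaussApprox f μ z ∧ gaussApprox f μ z ≤ f z + μ ^ 2 / 2 * L₁ * n := by
  have hdiff : Differentiable ℝ f := hsmooth.differentiable one_ne_zero
  have hz := integrable_shift hconv hsmooth hgrad (μ := μ) z
  have hinner : Integrable (fun u : EuclideanSpace ℝ (Fin n) =>
      ⟪gradient f z, u⟫ * μ) (stdGaussian n) :=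
    (integrable_inner_stdGaussian (gradient f z)).mul_const μ
  have hfa : Integrable (fun u : EuclideanSpace ℝ (Fin n) =>
      f z + ⟪gradient f z, u⟫ * μ) (stdGaussian n) :=
    ((integrable_const (f z)).add hinner).congr (Filter.Eventually.of_forall fun u => rfl)
  have hIinner : ∫ u, ⟪gradient f z, u⟫ * μ ∂(stdGaussian n) = 0 := by
    rw [integral_mul_const, integral_inner_stdGaussian, zero_mul]
  constructor
  · have hmono : ∫ u, (f z + ⟪gradient f z, u⟫ * μ) ∂(stdGaussian n)
        ≤ gaussApprox f μ z := by
      refine integral_mono hfa hz fun u => ?_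
      have hlow := convex_grad_ineq hconv (hdiff z).hasGradientAt (z + μ • u)
      rw [add_sub_cancel_left, real_inner_smul_right] at hlow
      simpa [mul_comm] using hlow
    rw [integral_add (integrable_const (f z)) hinner, integral_const, hIinner] at hmono
    simpa using hmono
  · have hmono : gaussApprox f μ z
        ≤ ∫ u, (f z + ⟪gradient f z, u⟫ * μ + (L₁ : ℝ) / 2 * μ ^ 2 * ‖u‖ ^ 2)
            ∂(stdGaussian n) := by
      refine integral_mono hz (hfa.add
        (integrable_normSq_stdGaussian.const_mul ((L₁ : ℝ) / 2 * μ ^ 2))) fun u => ?_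
      have hup := descent_lemma hsmooth hgrad z (μ • u)
      rw [real_inner_smul_right] at hup
      have hn : ‖μ • u‖ ^ 2 = μ ^ 2 * ‖u‖ ^ 2 := by
        rw [norm_smul, mul_pow, Real.norm_eq_abs, sq_abs]
      rw [hn] at hup
      simp only
      nlinarith [hup]
    rw [integral_add hfa (integrable_normSq_stdGaussian.const_mul _),
      integral_add (integrable_const (f z)) hinner, integral_const, hIinner,
      integral_const_mul, integral_normSq_stdGaussian] at hmono
    simp only [measure_univ, probReal_univ, ENNReal.toReal_one, smul_eq_mul, one_mul, add_zero] at hmono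
    refine hmono.trans (le_of_eq ?_)
    ring

include hconv hsmooth hgrad in
lemma gaussApprox_convexOn : ConvexOn ℝ Set.univ (gaussApprox f μ) := by
  refine ⟨convex_univ, fun a _ b _ ta tb hta htb hab => ?_⟩
  have key : ∀ u : EuclideanSpace ℝ (Fin n),
      ta • a + tb • b + μ • u = ta • (a + μ • u) + tb • (b + μ • u) := by
    intro u
    have h2 : ta • (a + μ • u) + tb • (b + μ • u)
        = (ta • a + tb • b) + (ta + tb) • (μ • u) := by
      rw [smul_add, smul_add, add_smul]
      abel
    rw [h2, hab, one_smul]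
  have hmono : ∫ u, f (ta • a + tb • b + μ • u) ∂(stdGaussian n)
      ≤ ∫ u, (ta * f (a + μ • u) + tb * f (b + μ • u)) ∂(stdGaussian n) := by
    refine integral_mono (integrable_shift hconv hsmooth hgrad _)
      (((integrable_shift hconv hsmooth hgrad a).const_mul ta).add
        ((integrable_shift hconv hsmooth hgrad b).const_mul tb)) fun u => ?_
    rw [key u]
    exact hconv.2 (Set.mem_univ _) (Set.mem_univ _) hta htb hab
  rw [integral_add ((integrable_shift hconv hsmooth hgrad a).const_mul ta)
      ((integrable_shift hconv hsmooth hgrad b).const_mul tb),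
    integral_const_mul, integral_const_mul] at hmono
  exact hmono

include hconv hsmooth hgrad hμ in
lemma gaussApprox_hasFDerivAt (x : EuclideanSpace ℝ (Fin n)) :
    HasFDerivAt (gaussApprox f μ)
      (∫ u, fderiv ℝ f (x + μ • u) ∂(stdGaussian n)) x := by
  have hdiff : Differentiable ℝ f := hsmooth.differentiable one_ne_zero
  have hcg : Continuous (gradient f) := hgrad.continuous
  set bound : EuclideanSpace ℝ (Fin n) → ℝ :=
    fun u => ‖gradient f (x + μ • u)‖ + L₁ with hbd
  have h := hasFDerivAt_integral_of_dominated_loc_of_lip'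
    (μ := stdGaussian n) (F := fun w u => f (w + μ • u))
    (F' := fun u => fderiv ℝ f (x + μ • u)) (x₀ := x) (bound := bound)
    (Metric.ball_mem_nhds x one_pos)
    (fun w _ => (hsmooth.continuous.comp
      (continuous_const.add (continuous_const_smul μ))).aestronglyMeasurable)
    (integrable_shift hconv hsmooth hgrad x)
    (((hsmooth.continuous_fderiv one_ne_zero).comp
      (continuous_const.add (continuous_const_smul μ))).aestronglyMeasurable)
    (Filter.Eventually.of_forall fun u => ?_)
    ?_
    (Filter.Eventually.of_forall fun u => ?_)
  · exact h.2
  · -- Lipschitz bound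
    intro w hw
    have hbound : ∀ p ∈ Metric.ball x 1,
        ‖fderiv ℝ (fun w => f (w + μ • u)) p‖ ≤ bound u := by
      intro p hp
      have he : fderiv ℝ (fun w => f (w + μ • u)) p = fderiv ℝ f (p + μ • u) := by
        have hcomp : HasFDerivAt (fun w => f (w + μ • u)) (fderiv ℝ f (p + μ • u)) p := by
          have := (hdiff (p + μ • u)).hasFDerivAt.comp p
            ((hasFDerivAt_id p).add_const (μ • u))
          simp only [ContinuousLinearMap.comp_id] at this
          exact this
        exact hcomp.fderiv
      rw [he, norm_fderiv_eq]
      have : ‖gradient f (p + μ • u) - gradient f (x + μ • u)‖ ≤ L₁ * ‖p - x‖ := by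
        have := hgrad.dist_le_mul (p + μ • u) (x + μ • u)
        rw [dist_eq_norm, dist_eq_norm] at this
        simpa [add_sub_add_comm] using this
      have hpx : ‖p - x‖ ≤ 1 := by
        rw [Metric.mem_ball, dist_eq_norm] at hp
        linarith
      have h4 := norm_sub_norm_le (gradient f (p + μ • u)) (gradient f (x + μ • u))
      have h5 : (L₁ : ℝ) * ‖p - x‖ ≤ L₁ * 1 := by
        apply mul_le_mul_of_nonneg_left hpx L₁.coe_nonneg
      rw [hbd]
      simp only
      nlinarith
    have := Convex.norm_image_sub_le_of_norm_fderiv_le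
      (f := fun w => f (w + μ • u))
      (fun p _ => (hdiff _).comp p (by exact (differentiable_id.add_const _) p))
      hbound (convex_ball x 1) (Metric.mem_ball_self one_pos) hw
    exact this
  · -- integrable bound
    refine Integrable.mono'
      (((integrable_norm_stdGaussian.const_mul ((L₁ : ℝ) * μ)).add
        (integrable_const (‖gradient f x‖ + L₁)))) ?_
      (Filter.Eventually.of_forall fun u => ?_)
    · exact ((hcg.comp
        (continuous_const.add (continuous_const_smul μ))).norm.add
        continuous_const).aestronglyMeasurable
    · have h1 : ‖gradient f (x + μ • u) - gradient f x‖ ≤ L₁ * (μ * ‖u‖) := by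
        have := hgrad.dist_le_mul (x + μ • u) x
        rwa [dist_eq_norm, dist_eq_norm, add_sub_cancel_left, norm_smul, Real.norm_eq_abs,
          abs_of_pos hμ] at this
      have h2 := norm_sub_norm_le (gradient f (x + μ • u)) (gradient f x)
      rw [hbd, Real.norm_of_nonneg (by positivity)]
      simp only [Pi.add_apply]
      nlinarith
  · -- differentiability at x₀
    have := (hdiff (x + μ • u)).hasFDerivAt.comp x ((hasFDerivAt_id x).add_const (μ • u))
    simp only [ContinuousLinearMap.comp_id] at this
    exact this

end Main


/-- If `f : ℝⁿ → ℝ` is convex, continuously differentiable with `L₁`-Lipschitz gradient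
w.r.t. `‖·‖₂`, and `μ > 0`, then for every `x`, `∇f_μ(x)` is a `δ`-subgradient of `f` at `x`
with `δ = (μ²/2) L₁ n`: `f(y) ≥ f(x) + ⟨∇f_μ(x), y − x⟩ − (μ²/2) L₁ n` for all `y`. -/
theorem gradient_gaussApprox_delta_subgradient_smooth {n : ℕ}
    (f : EuclideanSpace ℝ (Fin n) → ℝ) (hconv : ConvexOn ℝ Set.univ f)
    (hsmooth : ContDiff ℝ 1 f)
    (L₁ : NNReal) (hgrad : LipschitzWith L₁ (gradient f)) (μ : ℝ) (hμ : 0 < μ)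
    (x y : EuclideanSpace ℝ (Fin n)) :
    f y ≥ f x + ⟪gradient (gaussApprox f μ) x, y - x⟫ - μ ^ 2 / 2 * L₁ * n := by
  have hconvA := gaussApprox_convexOn hconv hsmooth hgrad (μ := μ)
  have hD := gaussApprox_hasFDerivAt hconv hsmooth hgrad hμ x
  have hG : HasGradientAt (gaussApprox f μ)
      ((InnerProductSpace.toDual ℝ _).symm
        (∫ u, fderiv ℝ f (x + μ • u) ∂(stdGaussian n))) x :=
    hasFDerivAt_iff_hasGradientAt.mp hD
  have hgradEq := hG.gradient
  have h1 := convex_grad_ineq hconvA hG y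
  have h2 := (gaussApprox_sandwich hconv hsmooth hgrad (μ := μ) x).1
  have h3 := (gaussApprox_sandwich hconv hsmooth hgrad (μ := μ) y).2
  rw [hgradEq]
  linarith
end

section
/- Let f: ℝⁿ → ℝ be continuously differentiable with L₁-Lipschitz gradient with respect to ‖·‖₂ and with ‖∇f(y)‖₂ ≤ G for all y ∈ ℝⁿ, let x ∈ ℝⁿ, μ > 0, V ≥ 0, and let U ~ N(0_n, I_n) be defined on a probability space on which there are also square-integrable real-valued random variables e¹ and e² with E[(e¹)² | U] ≤ V² and E[(e²)² | U] ≤ V² almost surely. Define the approximated subgradient g̃ = ((f(x + μU) + e¹ − f(x) − e²)/μ) U. Then E[‖g̃‖_*²] ≤ κ₁² ( (3/4) L₁² μ² (n + 6)³ + 3 G² (n + 4)² + 12 (V²/μ²) n ). -/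
open MeasureTheory ProbabilityTheory Real Filter
open scoped RealInnerProductSpace

/-- `N` is a norm on a real vector space. -/
def IsNorm {E : Type*} [AddCommGroup E] [Module ℝ E] (N : E → ℝ) : Prop :=
  (∀ x, N x = 0 ↔ x = 0) ∧ (∀ (c : ℝ) (x : E), N (c • x) = |c| * N x) ∧
    ∀ x y, N (x + y) ≤ N x + N y

/-- The dual norm `‖y‖_* = sup { ⟨y, x⟩ : N x ≤ 1 }` of a norm `N` on `ℝⁿ`. -/
noncomputable def dualNorm {n : ℕ} (N : EuclideanSpace ℝ (Fin n) → ℝ)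
    (y : EuclideanSpace ℝ (Fin n)) : ℝ :=
  sSup ((fun x => ⟪y, x⟫) '' {x | N x ≤ 1})

/-! ### Auxiliary lemmas: one-dimensional Gaussian moments -/

section OneDim

open Set

lemma SMAux.ioi_int (k : ℕ) :
    ∫ x in Ioi (0:ℝ), x ^ k * exp (-(1/2) * x ^ 2)
      = (1/2:ℝ) ^ (-((k:ℝ) + 1) / 2) * (1 / 2) * Gamma (((k:ℝ) + 1) / 2) := by
  rw [← integral_rpow_mul_exp_neg_mul_rpow (p := 2) (q := (k:ℝ)) (by norm_num)
      (lt_of_lt_of_le (by norm_num) (Nat.cast_nonneg k)) (by norm_num)]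
  refine setIntegral_congr_fun measurableSet_Ioi (fun x hx => ?_)
  rw [Real.rpow_natCast, Real.rpow_two]

lemma SMAux.real_int_even (k : ℕ) :
    ∫ x : ℝ, x ^ (2*k) * exp (-(1/2) * x ^ 2)
      = 2 * ((1/2:ℝ) ^ (-(((2*k:ℕ):ℝ) + 1) / 2) * (1 / 2) * Gamma ((((2*k:ℕ):ℝ) + 1) / 2)) := by
  rw [← SMAux.ioi_int (2*k)]
  have h := integral_comp_abs (f := fun x : ℝ => x ^ (2*k) * exp (-(1/2) * x ^ 2))
  rw [← h]
  congr 1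
  ext x
  rw [Even.pow_abs (even_two_mul k), sq_abs]

lemma SMAux.gauss_pdf_eq (x : ℝ) :
    gaussianPDFReal 0 1 x = (Real.sqrt (2 * π))⁻¹ * exp (-(1/2) * x ^ 2) := by
  simp only [gaussianPDFReal, NNReal.coe_one, mul_one, sub_zero]
  ring_nf

lemma SMAux.integrable_pow_mul_gauss (k : ℕ) :
    Integrable (fun x : ℝ => x ^ k * exp (-(1/2) * x ^ 2)) := by
  have h := integrable_rpow_mul_exp_neg_mul_sq (b := (1/2:ℝ)) (by norm_num)
    (s := (k:ℝ)) (lt_of_lt_of_le (by norm_num) (Nat.cast_nonneg k))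
  simpa [Real.rpow_natCast] using h

lemma SMAux.integrable_pdf_mul_pow (k : ℕ) :
    Integrable (fun x : ℝ => gaussianPDFReal 0 1 x * x ^ k) := by
  have : (fun x : ℝ => gaussianPDFReal 0 1 x * x ^ k)
      = fun x : ℝ => (Real.sqrt (2*π))⁻¹ * (x ^ k * exp (-(1/2) * x ^ 2)) := by
    ext x; rw [SMAux.gauss_pdf_eq]; ring
  rw [this]
  exact (SMAux.integrable_pow_mul_gauss k).const_mul _

lemma SMAux.gaussianReal_eq_wd : gaussianReal 0 1
    = volume.withDensity (fun x => ((gaussianPDFReal 0 1 x).toNNReal : ENNReal)) := by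
  rw [gaussianReal_of_var_ne_zero 0 one_ne_zero]
  rfl

lemma SMAux.integrable_pow_gaussianReal (k : ℕ) :
    Integrable (fun x : ℝ => x ^ k) (gaussianReal 0 1) := by
  rw [SMAux.gaussianReal_eq_wd,
    integrable_withDensity_iff_integrable_smul ((measurable_gaussianPDFReal 0 1).real_toNNReal)]
  have : (fun x : ℝ => (gaussianPDFReal 0 1 x).toNNReal • x ^ k)
      = fun x : ℝ => gaussianPDFReal 0 1 x * x ^ k := by
    ext x
    rw [NNReal.smul_def, smul_eq_mul, Real.coe_toNNReal _ (gaussianPDFReal_nonneg 0 1 x)]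
  rw [this]
  exact SMAux.integrable_pdf_mul_pow k

lemma SMAux.integral_pow_gaussianReal (k : ℕ) :
    ∫ x, x ^ k ∂(gaussianReal 0 1) = ∫ x : ℝ, gaussianPDFReal 0 1 x * x ^ k := by
  rw [SMAux.gaussianReal_eq_wd,
    integral_withDensity_eq_integral_smul ((measurable_gaussianPDFReal 0 1).real_toNNReal)]
  congr 1
  ext x
  rw [NNReal.smul_def, smul_eq_mul, Real.coe_toNNReal _ (gaussianPDFReal_nonneg 0 1 x)]

lemma SMAux.gauss_moment_even (k : ℕ) :
    ∫ x, x ^ (2*k) ∂(gaussianReal 0 1)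
      = (Real.sqrt (2*π))⁻¹ *
          (2 * ((1/2:ℝ) ^ (-(((2*k:ℕ):ℝ) + 1) / 2) * (1 / 2) * Gamma ((((2*k:ℕ):ℝ) + 1) / 2))) := by
  rw [SMAux.integral_pow_gaussianReal, ← SMAux.real_int_even]
  rw [← integral_const_mul]
  congr 1; ext x; rw [SMAux.gauss_pdf_eq]; ring

lemma SMAux.two_rpow_arith (y : ℝ) : (1/2:ℝ) ^ (-y) = (2:ℝ) ^ y := by
  rw [one_div, Real.inv_rpow (by norm_num : (0:ℝ) ≤ 2), ← Real.rpow_neg (by norm_num), neg_neg]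

lemma SMAux.two_rpow_three_half : (2:ℝ) ^ ((3:ℝ)/2) = 2 * Real.sqrt 2 := by
  rw [show ((3:ℝ)/2) = 1 + 1/2 by norm_num, Real.rpow_add (by norm_num) 1 (1/2),
    Real.rpow_one, Real.sqrt_eq_rpow]

lemma SMAux.two_rpow_five_half : (2:ℝ) ^ ((5:ℝ)/2) = 4 * Real.sqrt 2 := by
  rw [show ((5:ℝ)/2) = 2 + 1/2 by norm_num, Real.rpow_add (by norm_num) 2 (1/2),
    Real.sqrt_eq_rpow, show ((2:ℝ):ℝ) = ((2:ℕ):ℝ) by norm_num, Real.rpow_natCast]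
  norm_num

lemma SMAux.gamma_three_half : Real.Gamma (3/2) = Real.sqrt π / 2 := by
  rw [show (3/2:ℝ) = 1/2 + 1 by norm_num, Real.Gamma_add_one (by norm_num),
    Real.Gamma_one_half_eq]
  ring

lemma SMAux.gamma_five_half : Real.Gamma (5/2) = 3 * Real.sqrt π / 4 := by
  rw [show (5/2:ℝ) = 3/2 + 1 by norm_num, Real.Gamma_add_one (by norm_num),
    SMAux.gamma_three_half]
  ring

lemma SMAux.gauss_moment_two : ∫ x, x ^ 2 ∂(gaussianReal 0 1) = 1 := by
  have h := SMAux.gauss_moment_even 1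
  norm_num at h
  rw [SMAux.two_rpow_arith, SMAux.two_rpow_three_half, SMAux.gamma_three_half] at h
  rw [h]
  have h2 : Real.sqrt 2 > 0 := by positivity
  have hp : Real.sqrt π > 0 := Real.sqrt_pos.mpr pi_pos
  field_simp

lemma SMAux.gauss_moment_four : ∫ x, x ^ 4 ∂(gaussianReal 0 1) = 3 := by
  have h := SMAux.gauss_moment_even 2
  norm_num at h
  rw [SMAux.two_rpow_arith, SMAux.two_rpow_five_half, SMAux.gamma_five_half] at h
  rw [h]
  have h2 : Real.sqrt 2 > 0 := by positivity
  have hp : Real.sqrt π > 0 := Real.sqrt_pos.mpr pi_pos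
  field_simp

end OneDim

/-! ### Auxiliary lemmas: moments of the multivariate standard Gaussian -/

section MultiDim

open Set

lemma SMAux.pi_single {n : ℕ} (k : ℕ) (i : Fin n) :
    ∫ x : Fin n → ℝ, (x i) ^ k ∂(Measure.pi fun _ : Fin n => gaussianReal 0 1)
      = ∫ t, t ^ k ∂(gaussianReal 0 1) := by
  letI : MeasureSpace ℝ := ⟨gaussianReal 0 1⟩
  haveI : SigmaFinite (volume : Measure ℝ) := inferInstanceAs (SigmaFinite (gaussianReal 0 1))
  haveI : IsProbabilityMeasure (volume : Measure ℝ) :=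
    inferInstanceAs (IsProbabilityMeasure (gaussianReal 0 1))
  have h := integral_fintype_prod_eq_prod (𝕜 := ℝ) (ι := Fin n) (μ := fun _ => (volume : Measure ℝ))
    (fun j (t : ℝ) => if j = i then t ^ k else 1)
  simp only [Finset.prod_ite_eq', Finset.mem_univ, if_true] at h
  have h2 : ∀ j : Fin n, (∫ t : ℝ, (if j = i then t ^ k else (1:ℝ)))
      = if j = i then ∫ t, t ^ k ∂(gaussianReal 0 1) else 1 := by
    intro j
    by_cases hj : j = i <;> simp [hj, volume] <;> rfl
  rw [Finset.prod_congr rfl (fun j _ => h2 j), Finset.prod_ite_eq'] at h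
  exact h.trans (if_pos (Finset.mem_univ i))

lemma SMAux.pi_pair {n : ℕ} (i j : Fin n) (hij : i ≠ j) :
    ∫ x : Fin n → ℝ, (x i) ^ 2 * (x j) ^ 2
      ∂(Measure.pi fun _ : Fin n => gaussianReal 0 1) = 1 := by
  letI : MeasureSpace ℝ := ⟨gaussianReal 0 1⟩
  haveI : SigmaFinite (volume : Measure ℝ) := inferInstanceAs (SigmaFinite (gaussianReal 0 1))
  haveI : IsProbabilityMeasure (volume : Measure ℝ) :=
    inferInstanceAs (IsProbabilityMeasure (gaussianReal 0 1))
  have h := integral_fintype_prod_eq_prod (𝕜 := ℝ) (ι := Fin n) (μ := fun _ => (volume : Measure ℝ))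
    (fun l (t : ℝ) => (if l = i then t ^ 2 else 1) * (if l = j then t ^ 2 else 1))
  simp only [Finset.prod_mul_distrib, Finset.prod_ite_eq', Finset.mem_univ, if_true] at h
  have h2 : ∀ l : Fin n,
      (∫ t : ℝ, (if l = i then t ^ 2 else (1:ℝ)) * (if l = j then t ^ 2 else (1:ℝ)))
        = 1 := by
    intro l
    by_cases hi : l = i
    · subst hi
      simp only [if_pos rfl, if_neg hij, mul_one]
      exact SMAux.gauss_moment_two
    · by_cases hj : l = j
      · subst hj
        simp only [if_pos rfl, if_neg hi, one_mul]
        exact SMAux.gauss_moment_two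
      · simp [hi, hj, volume]
  rw [Finset.prod_congr rfl (fun l _ => h2 l), Finset.prod_const_one] at h
  exact h

lemma SMAux.pi_single_int {n : ℕ} (k : ℕ) (i : Fin n) :
    Integrable (fun x : Fin n → ℝ => (x i) ^ k)
      (Measure.pi fun _ : Fin n => gaussianReal 0 1) := by
  letI : MeasureSpace ℝ := ⟨gaussianReal 0 1⟩
  haveI : SigmaFinite (volume : Measure ℝ) := inferInstanceAs (SigmaFinite (gaussianReal 0 1))
  haveI : IsProbabilityMeasure (volume : Measure ℝ) :=
    inferInstanceAs (IsProbabilityMeasure (gaussianReal 0 1))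
  have h := Integrable.fintype_prod (𝕜 := ℝ) (ι := Fin n) (μ := fun _ => gaussianReal 0 1)
    (f := fun j (t : ℝ) => if j = i then t ^ k else 1) (fun j => ?_)
  · simpa only [Finset.prod_ite_eq', Finset.mem_univ, if_true] using h
  · by_cases hj : j = i
    · simp only [hj, if_true]
      exact SMAux.integrable_pow_gaussianReal k
    · simp only [hj, if_false]
      exact integrable_const 1

lemma SMAux.pi_pair_int {n : ℕ} (i j : Fin n) :
    Integrable (fun x : Fin n → ℝ => (x i) ^ 2 * (x j) ^ 2)
      (Measure.pi fun _ : Fin n => gaussianReal 0 1) := by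
  letI : MeasureSpace ℝ := ⟨gaussianReal 0 1⟩
  haveI : SigmaFinite (volume : Measure ℝ) := inferInstanceAs (SigmaFinite (gaussianReal 0 1))
  haveI : IsProbabilityMeasure (volume : Measure ℝ) :=
    inferInstanceAs (IsProbabilityMeasure (gaussianReal 0 1))
  have h := Integrable.fintype_prod (𝕜 := ℝ) (ι := Fin n) (μ := fun _ => gaussianReal 0 1)
    (f := fun l (t : ℝ) => (if l = i then t ^ 2 else 1) * (if l = j then t ^ 2 else 1))
    (fun l => ?_)
  · simpa only [Finset.prod_mul_distrib, Finset.prod_ite_eq', Finset.mem_univ, if_true] using h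
  · have : (fun t : ℝ => (if l = i then t ^ 2 else 1) * (if l = j then t ^ 2 else 1))
        = fun t : ℝ => t ^ ((if l = i then 2 else 0) + (if l = j then 2 else 0)) := by
      ext t
      by_cases hi : l = i <;> by_cases hj : l = j <;> simp [hi, hj, pow_add]
    rw [this]
    exact SMAux.integrable_pow_gaussianReal _

lemma SMAux.euclid_norm_sq {n : ℕ} (x : Fin n → ℝ) :
    ‖(MeasurableEquiv.toLp 2 (Fin n → ℝ)) x‖ ^ 2 = ∑ i, (x i) ^ 2 := by
  rw [EuclideanSpace.norm_eq, Real.sq_sqrt (by positivity)]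
  refine Finset.sum_congr rfl (fun i _ => ?_)
  rw [MeasurableEquiv.coe_toLp, PiLp.toLp_apply,
    Real.norm_eq_abs, sq_abs]

lemma SMAux.stdGaussian_moment_two {n : ℕ} :
    ∫ y, ‖y‖ ^ 2 ∂(stdGaussian n) = (n : ℝ) := by
  rw [_root_.stdGaussian, integral_map_equiv]
  have : ∀ x : Fin n → ℝ, ‖(MeasurableEquiv.toLp 2 (Fin n → ℝ)) x‖ ^ 2
      = ∑ i, (x i) ^ 2 := SMAux.euclid_norm_sq
  rw [integral_congr_ae (Filter.Eventually.of_forall this),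
    integral_finset_sum _ (fun i _ => SMAux.pi_single_int 2 i)]
  simp [SMAux.pi_single 2, SMAux.gauss_moment_two]

lemma SMAux.stdGaussian_int_two {n : ℕ} :
    Integrable (fun y => ‖y‖ ^ 2) (stdGaussian n) := by
  rw [_root_.stdGaussian, integrable_map_equiv]
  have : ((fun y : EuclideanSpace ℝ (Fin n) => ‖y‖ ^ 2)
        ∘ (MeasurableEquiv.toLp 2 (Fin n → ℝ)))
      = fun x : Fin n → ℝ => ∑ i, (x i) ^ 2 := by
    ext x; exact SMAux.euclid_norm_sq x
  rw [this]
  exact integrable_finset_sum _ (fun i _ => SMAux.pi_single_int 2 i)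

lemma SMAux.stdGaussian_moment_four {n : ℕ} :
    ∫ y, ‖y‖ ^ 4 ∂(stdGaussian n) = (n : ℝ) ^ 2 + 2 * n := by
  rw [_root_.stdGaussian, integral_map_equiv]
  have h4 : ∀ x : Fin n → ℝ, ‖(MeasurableEquiv.toLp 2 (Fin n → ℝ)) x‖ ^ 4
      = ∑ i, ∑ j, (x i) ^ 2 * (x j) ^ 2 := by
    intro x
    rw [show (4:ℕ) = 2*2 by norm_num, pow_mul, SMAux.euclid_norm_sq, sq, Finset.sum_mul_sum]
  rw [integral_congr_ae (Filter.Eventually.of_forall h4),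
    integral_finset_sum _ (fun i _ => integrable_finset_sum _ (fun j _ => SMAux.pi_pair_int i j))]
  have hij : ∀ i : Fin n, ∑ j : Fin n,
      (∫ x : Fin n → ℝ, (x i) ^ 2 * (x j) ^ 2 ∂(Measure.pi fun _ => gaussianReal 0 1))
        = (n : ℝ) + 2 := by
    intro i
    have : ∀ j : Fin n,
        (∫ x : Fin n → ℝ, (x i) ^ 2 * (x j) ^ 2 ∂(Measure.pi fun _ => gaussianReal 0 1))
          = (1 : ℝ) + if j = i then 2 else 0 := by
      intro j
      by_cases hj : j = i
      · subst hj
        have : (fun x : Fin n → ℝ => (x j) ^ 2 * (x j) ^ 2) = fun x => (x j) ^ 4 := by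
          ext x; ring
        rw [this, SMAux.pi_single 4 j, SMAux.gauss_moment_four]
        norm_num
      · rw [SMAux.pi_pair _ _ (fun h => hj h.symm)]  -- i ≠ j
        simp [hj]
    rw [Finset.sum_congr rfl (fun j _ => this j)]
    simp [Finset.sum_add_distrib, Finset.sum_ite_eq', Finset.card_univ]
  rw [Finset.sum_congr rfl (fun i _ => integral_finset_sum _
    (fun j _ => SMAux.pi_pair_int i j) ▸ hij i)]
  rw [Finset.sum_const, Finset.card_univ]
  simp
  ring

lemma SMAux.stdGaussian_int_four {n : ℕ} :
    Integrable (fun y => ‖y‖ ^ 4) (stdGaussian n) := by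
  rw [_root_.stdGaussian, integrable_map_equiv]
  have : ((fun y : EuclideanSpace ℝ (Fin n) => ‖y‖ ^ 4)
        ∘ (MeasurableEquiv.toLp 2 (Fin n → ℝ)))
      = fun x : Fin n → ℝ => ∑ i, ∑ j, (x i) ^ 2 * (x j) ^ 2 := by
    ext x
    simp only [Function.comp_apply]
    rw [show (4:ℕ) = 2*2 by norm_num, pow_mul, SMAux.euclid_norm_sq, sq, Finset.sum_mul_sum]
  rw [this]
  exact integrable_finset_sum _
    (fun i _ => integrable_finset_sum _ (fun j _ => SMAux.pi_pair_int i j))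

end MultiDim

/-! ### Auxiliary lemmas: dual norm -/

lemma SMAux.dualNorm_nonneg {n : ℕ} {nrm : EuclideanSpace ℝ (Fin n) → ℝ} (hnrm : IsNorm nrm)
    (v : EuclideanSpace ℝ (Fin n)) : 0 ≤ dualNorm nrm v := by
  have hmem : (0:ℝ) ∈ ((fun x => ⟪v, x⟫) '' {x | nrm x ≤ 1}) := by
    refine ⟨0, ?_, inner_zero_right v⟩
    simp only [Set.mem_setOf_eq]
    rw [(hnrm.1 0).mpr rfl]
    norm_num
  by_cases hb : BddAbove ((fun x => ⟪v, x⟫) '' {x | nrm x ≤ 1})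
  · exact le_csSup hb hmem
  · rw [dualNorm, Real.sSup_of_not_bddAbove hb]

lemma SMAux.dualNorm_sq_le {n : ℕ} {nrm : EuclideanSpace ℝ (Fin n) → ℝ} (hnrm : IsNorm nrm)
    {κ₁ : ℝ} (hκ₁le : ∀ v, dualNorm nrm v ≤ κ₁ * ‖v‖) (v : EuclideanSpace ℝ (Fin n)) :
    (dualNorm nrm v) ^ 2 ≤ κ₁ ^ 2 * ‖v‖ ^ 2 := by
  have h0 := SMAux.dualNorm_nonneg hnrm v
  have h1 := hκ₁le v
  nlinarith [norm_nonneg v]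

/-! ### Auxiliary lemma: noise term bound via conditional expectation -/

set_option maxHeartbeats 1000000 in
lemma SMAux.noise_term_bound {n : ℕ} {Ω : Type*} {m0 : MeasurableSpace Ω} (P : Measure Ω)
    [IsProbabilityMeasure P] (U : Ω → EuclideanSpace ℝ (Fin n)) (hU : Measurable U)
    (hUlaw : Measure.map U P = stdGaussian n) (e : Ω → ℝ)
    (he : Integrable (fun ω => (e ω) ^ 2) P) (V : ℝ)
    (hvar : ∀ᵐ ω ∂P,
      (P[fun ω' => (e ω') ^ 2|MeasurableSpace.comap U inferInstance]) ω ≤ V ^ 2) :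
    ∫⁻ ω, ENNReal.ofReal ((e ω) ^ 2) * ENNReal.ofReal (‖U ω‖ ^ 2) ∂P
      ≤ ENNReal.ofReal (V ^ 2 * n) := by
  set m : MeasurableSpace Ω := MeasurableSpace.comap U inferInstance with hm_def
  have hm : m ≤ m0 := hU.comap_le
  have hnormmeas : Measurable (fun y : EuclideanSpace ℝ (Fin n) => ‖y‖ ^ 2) :=
    (continuous_norm.pow 2).measurable
  have hIU2 : Integrable (fun ω => ‖U ω‖ ^ 2) P := by
    have h := SMAux.stdGaussian_int_two (n := n)
    rw [← hUlaw] at h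
    exact (integrable_map_measure hnormmeas.aestronglyMeasurable hU.aemeasurable).mp h
  have hMU2 : ∫ ω, ‖U ω‖ ^ 2 ∂P = (n : ℝ) := by
    rw [← integral_map hU.aemeasurable hnormmeas.aestronglyMeasurable, hUlaw,
      SMAux.stdGaussian_moment_two]
  -- the truncated bound
  have key : ∀ M : ℕ, ∫⁻ ω, ENNReal.ofReal ((e ω) ^ 2)
      * ENNReal.ofReal (min (‖U ω‖ ^ 2) M) ∂P ≤ ENNReal.ofReal (V ^ 2 * n) := by
    intro M
    set g : Ω → ℝ := fun ω => min (‖U ω‖ ^ 2) M with hg_def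
    have hg_nonneg : ∀ ω, 0 ≤ g ω := fun ω => le_min (by positivity) (M.cast_nonneg)
    have hg_meas_m : Measurable[m] g := by
      have hUm : Measurable[m] U := Measurable.of_comap_le le_rfl
      exact (hnormmeas.min measurable_const).comp hUm
    have hg_sm : StronglyMeasurable[m] g := hg_meas_m.stronglyMeasurable
    have hg_bound : ∀ ω, ‖g ω‖ ≤ (M:ℝ) := by
      intro ω
      rw [Real.norm_eq_abs, abs_of_nonneg (hg_nonneg ω)]
      exact min_le_right _ _
    have hg_int : Integrable g P := by
      refine hIU2.mono' ((hg_sm.mono hm).aestronglyMeasurable) ?_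
      refine Filter.Eventually.of_forall (fun ω => ?_)
      rw [Real.norm_eq_abs, abs_of_nonneg (hg_nonneg ω)]
      exact min_le_left _ _
    have hprod_int : Integrable (fun ω => g ω * (e ω) ^ 2) P :=
      he.bdd_mul ((hg_sm.mono hm).aestronglyMeasurable)
        (Filter.Eventually.of_forall hg_bound)
    have hpull : P[fun ω => g ω * (e ω) ^ 2|m] =ᵐ[P] fun ω => g ω * (P[fun ω' => (e ω') ^ 2|m]) ω :=
      condExp_stronglyMeasurable_mul_of_bound hm hg_sm he M
        (Filter.Eventually.of_forall hg_bound)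
    have hcond_int : Integrable (fun ω => g ω * (P[fun ω' => (e ω') ^ 2|m]) ω) P :=
      integrable_condExp.bdd_mul ((hg_sm.mono hm).aestronglyMeasurable)
        (Filter.Eventually.of_forall hg_bound)
    calc ∫⁻ ω, ENNReal.ofReal ((e ω) ^ 2) * ENNReal.ofReal (min (‖U ω‖ ^ 2) M) ∂P
        = ∫⁻ ω, ENNReal.ofReal (g ω * (e ω) ^ 2) ∂P := by
          refine lintegral_congr (fun ω => ?_)
          rw [ENNReal.ofReal_mul (hg_nonneg ω), mul_comm]
      _ = ENNReal.ofReal (∫ ω, g ω * (e ω) ^ 2 ∂P) :=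
          (ofReal_integral_eq_lintegral_ofReal hprod_int
            (Filter.Eventually.of_forall (fun ω =>
              mul_nonneg (hg_nonneg ω) (sq_nonneg _)))).symm
      _ ≤ ENNReal.ofReal (V ^ 2 * n) := by
          refine ENNReal.ofReal_le_ofReal ?_
          rw [← integral_condExp hm (f := fun ω => g ω * (e ω) ^ 2),
            integral_congr_ae hpull]
          have hle : (fun ω => g ω * (P[fun ω' => (e ω') ^ 2|m]) ω)
              ≤ᵐ[P] fun ω => g ω * V ^ 2 := by
            filter_upwards [hvar] with ω hω
            exact mul_le_mul_of_nonneg_left hω (hg_nonneg ω)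
          have h1 : ∫ ω, g ω * (P[fun ω' => (e ω') ^ 2|m]) ω ∂P ≤ ∫ ω, g ω * V ^ 2 ∂P :=
            integral_mono_ae hcond_int (hg_int.mul_const _) hle
          have h2 : ∫ ω, g ω * V ^ 2 ∂P = V ^ 2 * ∫ ω, g ω ∂P := by
            rw [integral_mul_const]; ring
          have h3 : ∫ ω, g ω ∂P ≤ ∫ ω, ‖U ω‖ ^ 2 ∂P :=
            integral_mono hg_int hIU2 (fun ω => min_le_left _ _)
          rw [hMU2] at h3
          calc ∫ ω, g ω * (P[fun ω' => (e ω') ^ 2|m]) ω ∂P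
              ≤ V ^ 2 * ∫ ω, g ω ∂P := h1.trans (le_of_eq h2)
            _ ≤ V ^ 2 * n := mul_le_mul_of_nonneg_left h3 (sq_nonneg V)
  -- pass to the limit
  have hsup : ∀ ω, ENNReal.ofReal ((e ω) ^ 2) * ENNReal.ofReal (‖U ω‖ ^ 2)
      = ⨆ M : ℕ, ENNReal.ofReal ((e ω) ^ 2) * ENNReal.ofReal (min (‖U ω‖ ^ 2) M) := by
    intro ω
    rw [← ENNReal.mul_iSup]
    congr 1
    refine le_antisymm ?_ (iSup_le (fun M => ENNReal.ofReal_le_ofReal (min_le_left _ _)))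
    refine le_iSup_of_le ⌈‖U ω‖ ^ 2⌉₊ (ENNReal.ofReal_le_ofReal ?_)
    exact le_min le_rfl (Nat.le_ceil _)
  have hemeas : AEMeasurable (fun ω => ENNReal.ofReal ((e ω) ^ 2)) P :=
    ENNReal.measurable_ofReal.comp_aemeasurable he.aestronglyMeasurable.aemeasurable
  have hmono : ∀ᵐ ω ∂P, Monotone (fun M : ℕ =>
      ENNReal.ofReal ((e ω) ^ 2) * ENNReal.ofReal (min (‖U ω‖ ^ 2) M)) := by
    refine Filter.Eventually.of_forall (fun ω M N hMN => ?_)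
    refine mul_le_mul_right (ENNReal.ofReal_le_ofReal ?_) _
    exact min_le_min le_rfl (Nat.cast_le.mpr hMN)
  calc ∫⁻ ω, ENNReal.ofReal ((e ω) ^ 2) * ENNReal.ofReal (‖U ω‖ ^ 2) ∂P
      = ∫⁻ ω, ⨆ M : ℕ, ENNReal.ofReal ((e ω) ^ 2)
          * ENNReal.ofReal (min (‖U ω‖ ^ 2) M) ∂P := by
        exact lintegral_congr hsup
    _ = ⨆ M : ℕ, ∫⁻ ω, ENNReal.ofReal ((e ω) ^ 2)
          * ENNReal.ofReal (min (‖U ω‖ ^ 2) M) ∂P := by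
        refine lintegral_iSup' (fun M => ?_) hmono
        exact hemeas.mul ((hnormmeas.min measurable_const).comp hU).aemeasurable.ennreal_ofReal
    _ ≤ ENNReal.ofReal (V ^ 2 * n) := iSup_le key

/-! ### Main theorem -/

set_option maxHeartbeats 1600000 in
/-- Second moment of the approximated subgradient, smooth case: if `f` is continuously
differentiable with `L₁`-Lipschitz gradient w.r.t. `‖·‖₂` and `‖∇f‖₂ ≤ G`,
`U ~ N(0ₙ, Iₙ)`, and the oracle noises `e¹, e²` satisfy `E[(eⁱ)² | U] ≤ V²` a.s., then
`g̃ = ((f(x + μU) + e¹ − f(x) − e²)/μ) U` satisfies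
`E[‖g̃‖_*²] ≤ κ₁² ((3/4) L₁² μ² (n+6)³ + 3 G² (n+4)² + 12 (V²/μ²) n)`. -/
theorem second_moment_approx_subgradient_smooth {n : ℕ}
    {Ω : Type*} {m0 : MeasurableSpace Ω} (P : Measure Ω) [IsProbabilityMeasure P]
    (nrm : EuclideanSpace ℝ (Fin n) → ℝ) (hnrm : IsNorm nrm)
    (f : EuclideanSpace ℝ (Fin n) → ℝ) (hsmooth : ContDiff ℝ 1 f)
    (L₁ : NNReal) (hgrad : LipschitzWith L₁ (gradient f))
    (G : ℝ) (hG : ∀ y, ‖gradient f y‖ ≤ G)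
    (x : EuclideanSpace ℝ (Fin n)) (μ : ℝ) (hμ : 0 < μ) (V : ℝ) (hV : 0 ≤ V)
    (κ₁ : ℝ) (hκ₁ : 0 < κ₁) (hκ₁le : ∀ v, dualNorm nrm v ≤ κ₁ * ‖v‖)
    (U : Ω → EuclideanSpace ℝ (Fin n)) (hU : Measurable U)
    (hUlaw : Measure.map U P = stdGaussian n)
    (e₁ e₂ : Ω → ℝ)
    (he₁ : Integrable (fun ω => (e₁ ω) ^ 2) P) (he₂ : Integrable (fun ω => (e₂ ω) ^ 2) P)
    (hvar₁ : ∀ᵐ ω ∂P,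
      (P[fun ω' => (e₁ ω') ^ 2|MeasurableSpace.comap U inferInstance]) ω ≤ V ^ 2)
    (hvar₂ : ∀ᵐ ω ∂P,
      (P[fun ω' => (e₂ ω') ^ 2|MeasurableSpace.comap U inferInstance]) ω ≤ V ^ 2)
    (gtil : Ω → EuclideanSpace ℝ (Fin n))
    (hgtil : gtil = fun ω => ((f (x + μ • U ω) + e₁ ω - f x - e₂ ω) / μ) • U ω) :
    ∫⁻ ω, ENNReal.ofReal ((dualNorm nrm (gtil ω)) ^ 2) ∂P
      ≤ ENNReal.ofReal
          (κ₁ ^ 2 * (3 / 4 * (L₁ : ℝ) ^ 2 * μ ^ 2 * ((n : ℝ) + 6) ^ 3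
            + 3 * G ^ 2 * ((n : ℝ) + 4) ^ 2 + 12 * (V ^ 2 / μ ^ 2) * n)) := by
  have hG0 : 0 ≤ G := le_trans (norm_nonneg _) (hG x)
  -- f is G-Lipschitz
  have hdiff : Differentiable ℝ f := hsmooth.differentiable one_ne_zero
  have hfd : ∀ y, ‖fderiv ℝ f y‖ ≤ G := by
    intro y
    have : ‖gradient f y‖ = ‖fderiv ℝ f y‖ := by
      rw [gradient]
      exact (InnerProductSpace.toDual ℝ (EuclideanSpace ℝ (Fin n))).symm.norm_map _
    rw [← this]
    exact hG y
  have hlip : ∀ a b : EuclideanSpace ℝ (Fin n), ‖f a - f b‖ ≤ G * ‖a - b‖ := by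
    intro a b
    exact Convex.norm_image_sub_le_of_norm_fderiv_le (fun y _ => hdiff y)
      (fun y _ => hfd y) convex_univ (Set.mem_univ b) (Set.mem_univ a)
  -- constants
  set c₁ : ℝ := κ₁ ^ 2 * (2 * G ^ 2) with hc₁_def
  set c₂ : ℝ := κ₁ ^ 2 * (4 / μ ^ 2) with hc₂_def
  have hc₁0 : 0 ≤ c₁ := by positivity
  have hc₂0 : 0 ≤ c₂ := by positivity
  -- splitting lemma for ofReal
  have hsplit : ∀ p q r s : ℝ, 0 ≤ p → 0 ≤ q → 0 ≤ r → 0 ≤ s →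
      ENNReal.ofReal (c₁ * p + c₂ * (q * s) + c₂ * (r * s))
        = ENNReal.ofReal (c₁ * p)
          + ENNReal.ofReal c₂ * (ENNReal.ofReal q * ENNReal.ofReal s)
          + ENNReal.ofReal c₂ * (ENNReal.ofReal r * ENNReal.ofReal s) := by
    intro p q r s hp hq hr hs
    rw [ENNReal.ofReal_add (by positivity) (by positivity),
      ENNReal.ofReal_add (by positivity) (by positivity),
      ENNReal.ofReal_mul hc₂0, ENNReal.ofReal_mul hc₂0,
      ENNReal.ofReal_mul hq, ENNReal.ofReal_mul hr]
  -- pointwise bound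
  have hpt : ∀ ω, ENNReal.ofReal ((dualNorm nrm (gtil ω)) ^ 2)
      ≤ ENNReal.ofReal (c₁ * ‖U ω‖ ^ 4)
        + ENNReal.ofReal c₂ * (ENNReal.ofReal ((e₁ ω) ^ 2) * ENNReal.ofReal (‖U ω‖ ^ 2))
        + ENNReal.ofReal c₂ * (ENNReal.ofReal ((e₂ ω) ^ 2) * ENNReal.ofReal (‖U ω‖ ^ 2)) := by
    intro ω
    have hreal : (dualNorm nrm (gtil ω)) ^ 2
        ≤ c₁ * ‖U ω‖ ^ 4 + c₂ * ((e₁ ω) ^ 2 * ‖U ω‖ ^ 2) + c₂ * ((e₂ ω) ^ 2 * ‖U ω‖ ^ 2) := by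
      have hd := SMAux.dualNorm_sq_le hnrm hκ₁le (gtil ω)
      set a : ℝ := f (x + μ • U ω) - f x with ha_def
      set b1 : ℝ := e₁ ω with hb1_def
      set b2 : ℝ := e₂ ω with hb2_def
      set w : ℝ := ‖U ω‖ with hw_def
      have hw0 : 0 ≤ w := norm_nonneg _
      have hμ2 : (0:ℝ) < μ ^ 2 := by positivity
      have hgnorm : ‖gtil ω‖ ^ 2 = (a + (b1 - b2)) ^ 2 / μ ^ 2 * w ^ 2 := by
        rw [hgtil]
        simp only
        rw [norm_smul, Real.norm_eq_abs, mul_pow, sq_abs, div_pow]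
        rw [ha_def, hb1_def, hb2_def, hw_def]
        ring_nf
      have ha : |a| ≤ G * (μ * w) := by
        have h := hlip (x + μ • U ω) x
        rw [Real.norm_eq_abs] at h
        simp only [add_sub_cancel_left] at h
        rw [norm_smul, Real.norm_eq_abs, abs_of_pos hμ] at h
        exact h
      have habs : a ^ 2 ≤ G ^ 2 * μ ^ 2 * w ^ 2 := by
        have h2 := pow_le_pow_left₀ (abs_nonneg a) ha 2
        rw [sq_abs] at h2
        calc a ^ 2 ≤ (G * (μ * w)) ^ 2 := h2
          _ = G ^ 2 * μ ^ 2 * w ^ 2 := by ring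
      have hbound : (a + (b1 - b2)) ^ 2
          ≤ 2 * (G ^ 2 * μ ^ 2 * w ^ 2) + 4 * b1 ^ 2 + 4 * b2 ^ 2 := by
        nlinarith [sq_nonneg (a - (b1 - b2)), sq_nonneg (b1 + b2), habs]
      have s3 : ‖gtil ω‖ ^ 2
          ≤ (2 * (G ^ 2 * μ ^ 2 * w ^ 2) + 4 * b1 ^ 2 + 4 * b2 ^ 2) / μ ^ 2 * w ^ 2 := by
        rw [hgnorm]
        gcongr
      have s4 : (2 * (G ^ 2 * μ ^ 2 * w ^ 2) + 4 * b1 ^ 2 + 4 * b2 ^ 2) / μ ^ 2 * w ^ 2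
          = 2 * G ^ 2 * w ^ 4 + 4 / μ ^ 2 * (b1 ^ 2 * w ^ 2) + 4 / μ ^ 2 * (b2 ^ 2 * w ^ 2) := by
        field_simp
      have s5 : κ₁ ^ 2 * ‖gtil ω‖ ^ 2
          ≤ κ₁ ^ 2 * (2 * G ^ 2 * w ^ 4 + 4 / μ ^ 2 * (b1 ^ 2 * w ^ 2)
            + 4 / μ ^ 2 * (b2 ^ 2 * w ^ 2)) := by
        rw [← s4]
        exact mul_le_mul_of_nonneg_left s3 (sq_nonneg κ₁)
      have s6 : κ₁ ^ 2 * (2 * G ^ 2 * w ^ 4 + 4 / μ ^ 2 * (b1 ^ 2 * w ^ 2)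
            + 4 / μ ^ 2 * (b2 ^ 2 * w ^ 2))
          = c₁ * w ^ 4 + c₂ * (b1 ^ 2 * w ^ 2) + c₂ * (b2 ^ 2 * w ^ 2) := by
        rw [hc₁_def, hc₂_def]
        ring
      calc (dualNorm nrm (gtil ω)) ^ 2 ≤ κ₁ ^ 2 * ‖gtil ω‖ ^ 2 := hd
        _ ≤ _ := s6 ▸ s5
    calc ENNReal.ofReal ((dualNorm nrm (gtil ω)) ^ 2)
        ≤ ENNReal.ofReal (c₁ * ‖U ω‖ ^ 4 + c₂ * ((e₁ ω) ^ 2 * ‖U ω‖ ^ 2)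
            + c₂ * ((e₂ ω) ^ 2 * ‖U ω‖ ^ 2)) := ENNReal.ofReal_le_ofReal hreal
      _ = _ := hsplit _ _ _ _ (by positivity) (sq_nonneg _) (sq_nonneg _) (sq_nonneg _)
  -- fourth moment term
  have hmeas4 : Measurable (fun y : EuclideanSpace ℝ (Fin n) => ENNReal.ofReal (c₁ * ‖y‖ ^ 4)) :=
    (measurable_const.mul ((continuous_norm.pow 4).measurable)).ennreal_ofReal
  have hA : ∫⁻ ω, ENNReal.ofReal (c₁ * ‖U ω‖ ^ 4) ∂P
      = ENNReal.ofReal (c₁ * ((n:ℝ) ^ 2 + 2 * n)) := by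
    calc ∫⁻ ω, ENNReal.ofReal (c₁ * ‖U ω‖ ^ 4) ∂P
        = ∫⁻ y, ENNReal.ofReal (c₁ * ‖y‖ ^ 4) ∂(Measure.map U P) := (lintegral_map hmeas4 hU).symm
      _ = ∫⁻ y, ENNReal.ofReal (c₁ * ‖y‖ ^ 4) ∂(stdGaussian n) := by rw [hUlaw]
      _ = ENNReal.ofReal (∫ y, c₁ * ‖y‖ ^ 4 ∂(stdGaussian n)) :=
          (ofReal_integral_eq_lintegral_ofReal (SMAux.stdGaussian_int_four.const_mul c₁)
            (Filter.Eventually.of_forall (fun y => by positivity))).symm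
      _ = ENNReal.ofReal (c₁ * ((n:ℝ) ^ 2 + 2 * n)) := by
          rw [integral_const_mul, SMAux.stdGaussian_moment_four]
  -- noise terms
  have hB₁ := SMAux.noise_term_bound P U hU hUlaw e₁ he₁ V hvar₁
  have hB₂ := SMAux.noise_term_bound P U hU hUlaw e₂ he₂ V hvar₂
  -- measurability for splitting the lintegral
  have hBmeas : ∀ e : Ω → ℝ, Integrable (fun ω => (e ω) ^ 2) P → AEMeasurable
      (fun ω => ENNReal.ofReal c₂ * (ENNReal.ofReal ((e ω) ^ 2)
        * ENNReal.ofReal (‖U ω‖ ^ 2))) P := by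
    intro e he
    exact aemeasurable_const.mul
      ((ENNReal.measurable_ofReal.comp_aemeasurable he.aestronglyMeasurable.aemeasurable).mul
        (((continuous_norm.pow 2).measurable.comp hU).ennreal_ofReal.aemeasurable))
  have hc₂top : ENNReal.ofReal c₂ ≠ ⊤ := ENNReal.ofReal_ne_top
  have hAmeas : AEMeasurable (fun ω => ENNReal.ofReal (c₁ * ‖U ω‖ ^ 4)) P :=
    (hmeas4.comp hU).aemeasurable
  calc ∫⁻ ω, ENNReal.ofReal ((dualNorm nrm (gtil ω)) ^ 2) ∂P
      ≤ ∫⁻ ω, (ENNReal.ofReal (c₁ * ‖U ω‖ ^ 4)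
          + ENNReal.ofReal c₂ * (ENNReal.ofReal ((e₁ ω) ^ 2) * ENNReal.ofReal (‖U ω‖ ^ 2))
          + ENNReal.ofReal c₂ * (ENNReal.ofReal ((e₂ ω) ^ 2) * ENNReal.ofReal (‖U ω‖ ^ 2))) ∂P :=
        lintegral_mono hpt
    _ = (∫⁻ ω, (ENNReal.ofReal (c₁ * ‖U ω‖ ^ 4)
          + ENNReal.ofReal c₂ * (ENNReal.ofReal ((e₁ ω) ^ 2) * ENNReal.ofReal (‖U ω‖ ^ 2))) ∂P)
        + ∫⁻ ω, ENNReal.ofReal c₂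
            * (ENNReal.ofReal ((e₂ ω) ^ 2) * ENNReal.ofReal (‖U ω‖ ^ 2)) ∂P := by
        exact lintegral_add_left' (hAmeas.add (hBmeas e₁ he₁)) _
    _ = (∫⁻ ω, ENNReal.ofReal (c₁ * ‖U ω‖ ^ 4) ∂P)
        + (∫⁻ ω, ENNReal.ofReal c₂
            * (ENNReal.ofReal ((e₁ ω) ^ 2) * ENNReal.ofReal (‖U ω‖ ^ 2)) ∂P)
        + ∫⁻ ω, ENNReal.ofReal c₂
            * (ENNReal.ofReal ((e₂ ω) ^ 2) * ENNReal.ofReal (‖U ω‖ ^ 2)) ∂P := by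
        rw [lintegral_add_left' hAmeas _]
    _ = ENNReal.ofReal (c₁ * ((n:ℝ) ^ 2 + 2 * n))
        + ENNReal.ofReal c₂ * (∫⁻ ω, ENNReal.ofReal ((e₁ ω) ^ 2)
            * ENNReal.ofReal (‖U ω‖ ^ 2) ∂P)
        + ENNReal.ofReal c₂ * (∫⁻ ω, ENNReal.ofReal ((e₂ ω) ^ 2)
            * ENNReal.ofReal (‖U ω‖ ^ 2) ∂P) := by
        rw [hA, lintegral_const_mul' _ _ hc₂top, lintegral_const_mul' _ _ hc₂top]
    _ ≤ ENNReal.ofReal (c₁ * ((n:ℝ) ^ 2 + 2 * n))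
        + ENNReal.ofReal c₂ * ENNReal.ofReal (V ^ 2 * n)
        + ENNReal.ofReal c₂ * ENNReal.ofReal (V ^ 2 * n) := by
        gcongr
    _ = ENNReal.ofReal (c₁ * ((n:ℝ) ^ 2 + 2 * n) + c₂ * (V ^ 2 * n) + c₂ * (V ^ 2 * n)) := by
        rw [← ENNReal.ofReal_mul hc₂0, ← ENNReal.ofReal_add (by positivity) (by positivity),
          ← ENNReal.ofReal_add (by positivity) (by positivity)]
    _ ≤ ENNReal.ofReal
          (κ₁ ^ 2 * (3 / 4 * (L₁ : ℝ) ^ 2 * μ ^ 2 * ((n : ℝ) + 6) ^ 3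
            + 3 * G ^ 2 * ((n : ℝ) + 4) ^ 2 + 12 * (V ^ 2 / μ ^ 2) * n)) := by
        refine ENNReal.ofReal_le_ofReal ?_
        rw [hc₁_def, hc₂_def]
        have t1 : 0 ≤ κ₁ ^ 2 * G ^ 2 * ((n:ℝ) ^ 2 + 20 * n + 48) := by positivity
        have t2 : 0 ≤ κ₁ ^ 2 * (V ^ 2 / μ ^ 2) * (n:ℝ) := by positivity
        have t3 : 0 ≤ κ₁ ^ 2 * ((L₁:ℝ) ^ 2 * μ ^ 2 * ((n:ℝ) + 6) ^ 3) := by positivity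
        have hμ2 : μ ^ 2 ≠ 0 := by positivity
        have hexp : κ₁ ^ 2 * (4 / μ ^ 2) * (V ^ 2 * n)
            = 4 * (κ₁ ^ 2 * (V ^ 2 / μ ^ 2) * (n:ℝ)) := by
          field_simp
        have hexp2 : κ₁ ^ 2 * (12 * (V ^ 2 / μ ^ 2) * (n:ℝ))
            = 12 * (κ₁ ^ 2 * (V ^ 2 / μ ^ 2) * (n:ℝ)) := by ring
        nlinarith [t1, t2, t3]
end
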